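/- Let T be a minimal spanning tree on a metric space (M, ρ), and let M = M₁ ⊔ M₂ be a partition into nonempty sets. Then the set of edges of T connecting M₁ and M₂ is infinite if and only if ρ(M₁, M₂) = 0. -/

import Mathlib

open scoped ENNReal

namespace MSTPaper

variable {M : Type*}

/-- The length of an edge `e` of a graph on a metric space: the extended
distance between its endpoints. -/
noncomputable def edgeLen [MetricSpace M] (e : Sym2 M) : ℝ≥0∞ :=
  Sym2.lift ⟨fun x y => edist x y, fun x y => edist_comm x y⟩ e

/-- The length of a graph: the (possibly infinite) sum of the lengths of its edges. -/
noncomputable def graphLen [MetricSpace M] (G : SimpleGraph M) : ℝ≥0∞ :=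
  ∑' e : G.edgeSet, edgeLen (e : Sym2 M)

/-- The distance between two subsets of a metric space. -/
noncomputable def setDist [MetricSpace M] (A B : Set M) : ℝ≥0∞ :=
  ⨅ x ∈ A, ⨅ y ∈ B, edist x y

/-- A minimal spanning tree on the metric space `M`: a spanning tree of finite
length whose length equals the infimum of lengths of all spanning trees on `M`. -/
def IsMST [MetricSpace M] (T : SimpleGraph M) : Prop :=
  T.IsTree ∧ graphLen T < ⊤ ∧ ∀ T' : SimpleGraph M, T'.IsTree → graphLen T ≤ graphLen T'

/-- An edge `uv` of `G` is exact if its length equals the distance between the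
two connected components obtained by removing it. -/
def ExactEdge [MetricSpace M] (G : SimpleGraph M) (u v : M) : Prop :=
  edist u v = setDist {x | (G.deleteEdges {s(u,v)}).Reachable u x}
                      {x | (G.deleteEdges {s(u,v)}).Reachable v x}


section Aux
variable [MetricSpace M]
set_option linter.unusedSectionVars false

variable [MetricSpace M]

lemma edgeLen_mk (x y : M) : edgeLen s(x,y) = edist x y := rfl

lemma edgeLen_pos {G : SimpleGraph M} {e : Sym2 M} (he : e ∈ G.edgeSet) :
    0 < edgeLen e := by
  induction e with
  | _ x y =>
    rw [SimpleGraph.mem_edgeSet] at he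
    simpa [edgeLen_mk, edist_pos] using he.ne

lemma setDist_le {A B : Set M} {x y : M} (hx : x ∈ A) (hy : y ∈ B) :
    setDist A B ≤ edist x y :=
  le_trans (iInf₂_le x hx) (iInf₂_le y hy)

lemma exists_crossing_edge {G : SimpleGraph M} {M₁ M₂ : Set M}
    (hdisj : Disjoint M₁ M₂) (hunion : M₁ ∪ M₂ = Set.univ)
    {a b : M} (w : G.Walk a b) :
    a ∈ M₁ → b ∈ M₂ → ∃ u v, u ∈ M₁ ∧ v ∈ M₂ ∧ G.Adj u v ∧ s(u,v) ∈ w.edges := by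
  induction w with
  | nil => exact fun ha hb => (Set.disjoint_left.mp hdisj ha hb).elim
  | @cons a c b h p ih =>
    intro ha hb
    by_cases hc : c ∈ M₂
    · exact ⟨a, c, ha, hc, h, by simp⟩
    · have hc1 : c ∈ M₁ := by
        have hcu : c ∈ M₁ ∪ M₂ := hunion ▸ Set.mem_univ c
        rcases hcu with h' | h'
        · exact h'
        · exact (hc h').elim
      obtain ⟨u, v, hu, hv, huv, he⟩ := ih hc1 hb
      exact ⟨u, v, hu, hv, huv, by simp [he]⟩

lemma reachable_delete_or {G : SimpleGraph M} {u v a : M}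
    (p : G.Walk a u) :
    (G.deleteEdges {s(u,v)}).Reachable a u ∨ (G.deleteEdges {s(u,v)}).Reachable a v := by
  induction p with
  | nil => exact Or.inl (SimpleGraph.Reachable.refl _)
  | @cons a c u h p ih =>
    by_cases hc : s(a,c) = s(u,v)
    · rw [Sym2.eq_iff] at hc
      rcases hc with ⟨rfl, rfl⟩ | ⟨rfl, rfl⟩
      · exact Or.inl (SimpleGraph.Reachable.refl _)
      · exact Or.inr (SimpleGraph.Reachable.refl _)
    · have hadj : (G.deleteEdges {s(u,v)}).Adj a c := by
        simp only [SimpleGraph.deleteEdges_adj, Set.mem_singleton_iff]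
        exact ⟨h, hc⟩
      rcases ih with h1 | h1
      · exact Or.inl (hadj.reachable.trans h1)
      · exact Or.inr (hadj.reachable.trans h1)

lemma not_reachable_delete {T : SimpleGraph M} (hT : T.IsTree) {x y : M}
    {p : T.Walk x y} (hp : p.IsPath) {e : Sym2 M} (he : e ∈ p.edges) :
    ¬(T.deleteEdges {e}).Reachable x y := by
  rintro ⟨q⟩
  classical
  have hq1 : ∀ f ∈ (q.toPath : (T.deleteEdges {e}).Walk x y).edges,
      f ∈ T.edgeSet ∧ f ≠ e := by
    intro f hf
    have hfe := (q.toPath : (T.deleteEdges {e}).Walk x y).edges_subset_edgeSet hf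
    rw [SimpleGraph.edgeSet_deleteEdges] at hfe
    exact ⟨hfe.1, hfe.2⟩
  have hq2path : ((q.toPath : (T.deleteEdges {e}).Walk x y).transfer T
      (fun f hf => (hq1 f hf).1)).IsPath := (q.toPath).2.transfer _
  have heq := (hT.existsUnique_path x y).unique hq2path hp
  have hmem : e ∈ ((q.toPath : (T.deleteEdges {e}).Walk x y).transfer T
      (fun f hf => (hq1 f hf).1)).edges := heq ▸ he
  rw [SimpleGraph.Walk.edges_transfer] at hmem
  exact (hq1 e hmem).2 rfl

lemma tsum_insert' {f : Sym2 M → ℝ≥0∞} {s : Set (Sym2 M)} {a : Sym2 M} (ha : a ∉ s) :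
    ∑' e : ↥(insert a s), f ↑e = f a + ∑' e : ↥s, f ↑e := by
  rw [Set.insert_eq, Summable.tsum_union_disjoint (Set.disjoint_singleton_left.mpr ha)
    ENNReal.summable ENNReal.summable, tsum_singleton]

end Aux

/-- For a partition `M = M₁ ⊔ M₂`, a minimal spanning tree has infinitely many edges
connecting `M₁` and `M₂` iff `ρ(M₁, M₂) = 0`. -/
theorem mst_infinitely_many_crossing_edges_iff [MetricSpace M] (T : SimpleGraph M)
    (hT : IsMST T) (M₁ M₂ : Set M) (hdisj : Disjoint M₁ M₂) (hunion : M₁ ∪ M₂ = Set.univ)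
    (h₁ : M₁.Nonempty) (h₂ : M₂.Nonempty) :
    {e : Sym2 M | e ∈ T.edgeSet ∧ ∃ x ∈ M₁, ∃ y ∈ M₂, e = s(x,y)}.Infinite ↔
      setDist M₁ M₂ = 0 := by
  classical
  set S := {e : Sym2 M | e ∈ T.edgeSet ∧ ∃ x ∈ M₁, ∃ y ∈ M₂, e = s(x,y)} with hSdef
  have hcross_len : ∀ e ∈ S, setDist M₁ M₂ ≤ edgeLen e := by
    rintro e ⟨he, x, hx, y, hy, rfl⟩
    rw [edgeLen_mk]
    exact setDist_le hx hy
  constructor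
  · intro hinf
    by_contra h0
    have htop : graphLen T = ⊤ := by
      have h1 : (⊤ : ℝ≥0∞) ≤ ∑' e : ↥S, edgeLen (e : Sym2 M) := by
        have := hinf.to_subtype
        calc (⊤:ℝ≥0∞) = ∑' _ : ↥S, setDist M₁ M₂ :=
              (ENNReal.tsum_const_eq_top_of_ne_zero h0).symm
          _ ≤ ∑' e : ↥S, edgeLen (e : Sym2 M) :=
              ENNReal.tsum_le_tsum (fun e => hcross_len e e.2)
      have h2 : ∑' e : ↥S, edgeLen (e : Sym2 M) ≤ graphLen T := by
        have hinj : Function.Injective (fun e : ↥S => (⟨e.1, e.2.1⟩ : ↥T.edgeSet)) :=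
          by intro e f hef; apply Subtype.ext; simpa [Subtype.ext_iff] using hef
        exact ENNReal.tsum_comp_le_tsum_of_injective hinj (fun e => edgeLen (e : Sym2 M))
      exact top_le_iff.mp (h1.trans h2)
    exact absurd htop hT.2.1.ne
  · intro h0
    by_contra hfin
    rw [Set.not_infinite] at hfin
    obtain ⟨a, ha⟩ := h₁
    obtain ⟨b, hb⟩ := h₂
    obtain ⟨w0⟩ := hT.1.isConnected.preconnected a b
    obtain ⟨u0, v0, hu0, hv0, huv0, -⟩ := exists_crossing_edge hdisj hunion w0 ha hb
    have hS0 : s(u0,v0) ∈ S := ⟨huv0, u0, hu0, v0, hv0, rfl⟩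
    obtain ⟨em, hem, hmin⟩ := Set.exists_min_image S edgeLen hfin ⟨_, hS0⟩
    have hδpos : (0:ℝ≥0∞) < edgeLen em := edgeLen_pos hem.1
    have hlt : setDist M₁ M₂ < edgeLen em := h0.trans_lt hδpos
    obtain ⟨x, hx, y, hy, hxy⟩ : ∃ x ∈ M₁, ∃ y ∈ M₂, edist x y < edgeLen em := by
      simp only [setDist, iInf_lt_iff] at hlt
      obtain ⟨x, hx, y, hy, h⟩ := hlt
      exact ⟨x, hx, y, hy, h⟩
    have hxyne : x ≠ y := fun h => Set.disjoint_left.mp hdisj hx (h ▸ hy)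
    have hxyE : s(x,y) ∉ T.edgeSet := by
      intro hmem
      have hmm : s(x,y) ∈ S := ⟨hmem, x, hx, y, hy, rfl⟩
      have h' := hmin _ hmm
      rw [edgeLen_mk] at h'
      exact absurd (h'.trans_lt hxy) (lt_irrefl _)
    obtain ⟨w⟩ := hT.1.isConnected.preconnected x y
    have hp : (w.toPath : T.Walk x y).IsPath := w.toPath.2
    obtain ⟨u, v, hu, hv, huv, he⟩ :=
      exists_crossing_edge hdisj hunion (w.toPath : T.Walk x y) hx hy
    have heS : s(u,v) ∈ S := ⟨huv, u, hu, v, hv, rfl⟩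
    have hlen_uv : edist x y < edgeLen s(u,v) := hxy.trans_le (hmin _ heS)
    set G' := T.deleteEdges {s(u,v)} with hG'
    have hnr : ¬G'.Reachable x y := not_reachable_delete hT.1 hp he
    have hru : ∀ z : M, G'.Reachable z u ∨ G'.Reachable z v :=
      fun z => reachable_delete_or (hT.1.isConnected.preconnected z u).some
    set T' := SimpleGraph.fromEdgeSet (insert s(x,y) (T.edgeSet \ {s(u,v)})) with hT'def
    have hle : G' ≤ T' := by
      intro c d hcd
      rw [hG', SimpleGraph.deleteEdges_adj] at hcd
      rw [hT'def, SimpleGraph.fromEdgeSet_adj]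
      exact ⟨Set.mem_insert_of_mem _ ⟨hcd.1, hcd.2⟩, hcd.1.ne⟩
    have hxyT' : T'.Adj x y := by
      rw [hT'def, SimpleGraph.fromEdgeSet_adj]
      exact ⟨Set.mem_insert _ _, hxyne⟩
    have hreach : ∀ z : M, T'.Reachable z x := by
      rcases hru x with hxu | hxu <;> rcases hru y with hyu | hyu
      · exact absurd (hxu.trans hyu.symm) hnr
      · intro z
        rcases hru z with hz | hz
        · exact (hz.trans hxu.symm).mono hle
        · exact ((hz.trans hyu.symm).mono hle).trans hxyT'.symm.reachable
      · intro z
        rcases hru z with hz | hz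
        · exact ((hz.trans hyu.symm).mono hle).trans hxyT'.symm.reachable
        · exact (hz.trans hxu.symm).mono hle
      · exact absurd (hxu.trans hyu.symm) hnr
    have hconn : T'.Connected := by
      rw [SimpleGraph.connected_iff_exists_forall_reachable]
      exact ⟨x, fun z => (hreach z).symm⟩
    have hedges' : T'.edgeSet = insert s(x,y) (T.edgeSet \ {s(u,v)}) := by
      rw [hT'def, SimpleGraph.edgeSet_fromEdgeSet]
      ext e
      simp only [Set.mem_diff, Set.mem_setOf_eq, Set.mem_insert_iff, Set.mem_singleton_iff]
      constructor
      · rintro ⟨h, -⟩; exact h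
      · rintro h
        refine ⟨h, ?_⟩
        rcases h with rfl | ⟨h1, -⟩
        · simpa [Sym2.mk_isDiag_iff] using hxyne
        · exact T.not_isDiag_of_mem_edgeSet h1
    have hacyc : T'.IsAcyclic := by
      intro z c hc
      by_cases hxyc : s(x,y) ∈ c.edges
      · have hreach2 : (T' \ SimpleGraph.fromEdgeSet {s(x,y)}).Reachable x y :=
          (SimpleGraph.adj_and_reachable_delete_edges_iff_exists_cycle.mpr ⟨z, c, hc, hxyc⟩).2
        have hle2 : T' \ SimpleGraph.fromEdgeSet {s(x,y)} ≤ G' := by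
          intro c d hcd
          rw [SimpleGraph.sdiff_adj, SimpleGraph.fromEdgeSet_adj] at hcd
          obtain ⟨hT'cd, hnot⟩ := hcd
          obtain ⟨hmem, hne⟩ := hT'cd
          have hne2 : s(c,d) ≠ s(x,y) := fun h => hnot ⟨by simp [h], hne⟩
          rw [Set.mem_insert_iff] at hmem
          rcases hmem with h | h
          · exact (hne2 h).elim
          · rw [hG', SimpleGraph.deleteEdges_adj]
            exact ⟨(T.mem_edgeSet).mp h.1, h.2⟩
        exact hnr (hreach2.mono hle2)
      · have hsub : ∀ f ∈ c.edges, f ∈ T.edgeSet := by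
          intro f hf
          have hfe := c.edges_subset_edgeSet hf
          rw [hedges', Set.mem_insert_iff] at hfe
          rcases hfe with rfl | hfe
          · exact absurd hf hxyc
          · exact hfe.1
        exact hT.1.IsAcyclic (c.transfer T hsub) (hc.transfer hsub)
    set D := T.edgeSet \ {s(u,v)} with hD
    have hTedge : T.edgeSet = insert s(u,v) D := by
      rw [hD, Set.insert_diff_singleton, Set.insert_eq_self.mpr ((T.mem_edgeSet).mpr huv)]
    have hlenT : graphLen T = edgeLen s(u,v) + ∑' e : ↥D, edgeLen (e : Sym2 M) := by
      have h' : graphLen T = ∑' e : ↥(insert s(u,v) D), edgeLen (e : Sym2 M) := by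
        unfold graphLen; rw [hTedge]
      rw [h', tsum_insert' (by simp [hD])]
    have hlenT' : graphLen T' = edist x y + ∑' e : ↥D, edgeLen (e : Sym2 M) := by
      have h' : graphLen T' = ∑' e : ↥(insert s(x,y) D), edgeLen (e : Sym2 M) := by
        unfold graphLen; rw [hedges']
      rw [h', tsum_insert' (fun h => hxyE h.1), edgeLen_mk]
    have hDne : ∑' e : ↥D, edgeLen (e : Sym2 M) ≠ ⊤ := by
      intro h
      apply hT.2.1.ne
      rw [hlenT, h, add_top]
    have hltT : graphLen T' < graphLen T := by
      rw [hlenT, hlenT']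
      exact ENNReal.add_lt_add_right hDne hlen_uv
    exact absurd (hT.2.2 T' ⟨hconn, hacyc⟩) (not_le.mpr hltT)

end MSTPaper
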